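/- Let p > 3 be a prime. Then ∑_{ψ mod p} |∑_{u=1}^{p-1} ∑_{a=1}^{p-1} ψ̄(u·a - 1)·ψ(u·ā - 1)·ψ²(a - 1)|² = (p-1)(p³ - 8p² + 29p - 53), where the outer sum is over all Dirichlet characters ψ mod p. -/

import Mathlib

open Finset Complex

namespace Stmt4Aux

variable {p : ℕ} [Fact p.Prime]

def gfun (p : ℕ) [Fact p.Prime] (x : ZMod p × ZMod p) : ZMod p :=
  if x.1 = 0 ∨ x.2 = 0 ∨ x.1 * x.2 = 1 ∨ x.1 = x.2 ∨ x.2 = 1 then 0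
  else (x.1 * x.2⁻¹ - 1) * (x.2 - 1) ^ 2 * (x.1 * x.2 - 1)⁻¹

lemma five_le (hp : 3 < p) : 5 ≤ p := by
  have h := (Fact.out : p.Prime)
  by_contra hlt
  interval_cases p
  · exact absurd h (by decide)

lemma cast_ne_zero (hp : 3 < p) {n : ℕ} (h1 : 0 < n) (h2 : n < p) : (n : ZMod p) ≠ 0 := by
  rw [Ne, ZMod.natCast_eq_zero_iff]
  intro h
  exact absurd (Nat.le_of_dvd h1 h) (by omega)

lemma two_ne (hp : 3 < p) : (2 : ZMod p) ≠ 0 := by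
  have := cast_ne_zero hp (n := 2) (by norm_num) (by omega); exact_mod_cast this

lemma three_ne (hp : 3 < p) : (3 : ZMod p) ≠ 0 := by
  have := cast_ne_zero hp (n := 3) (by norm_num) (by omega); exact_mod_cast this

lemma four_ne (hp : 3 < p) : (4 : ZMod p) ≠ 0 := by
  have h5 := five_le hp
  have := cast_ne_zero hp (n := 4) (by norm_num) (by omega); exact_mod_cast this

lemma neg_one_ne_one (hp : 3 < p) : (-1 : ZMod p) ≠ 1 := by
  intro h
  exact two_ne hp (by linear_combination -h)

lemma neg_one_ne_zero' (hp : 3 < p) : (-1 : ZMod p) ≠ 0 := by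
  intro h; exact one_ne_zero (by linear_combination -h)

lemma sq_eq_one {a : ZMod p} (h : a * a = 1) : a = 1 ∨ a = -1 :=
  mul_self_eq_one_iff.mp h

lemma gfun_eq_of_ne {u a : ZMod p} (h : ¬(u = 0 ∨ a = 0 ∨ u * a = 1 ∨ u = a ∨ a = 1)) :
    gfun p (u, a) = (u * a⁻¹ - 1) * (a - 1) ^ 2 * (u * a - 1)⁻¹ := if_neg h

lemma gfun_ne_zero {u a : ZMod p} (h : ¬(u = 0 ∨ a = 0 ∨ u * a = 1 ∨ u = a ∨ a = 1)) :
    gfun p (u, a) ≠ 0 := by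
  push_neg at h
  obtain ⟨h0, ha0, hua, hun, ha1⟩ := h
  rw [gfun_eq_of_ne (by push_neg; exact ⟨h0, ha0, hua, hun, ha1⟩)]
  have h1 : u * a⁻¹ - 1 ≠ 0 := by
    intro h; apply hun
    have : u * a⁻¹ = 1 := by linear_combination h
    field_simp at this; exact this
  have h2 : (a - 1) ≠ 0 := sub_ne_zero.mpr ha1
  have h3 : (u * a - 1)⁻¹ ≠ 0 := inv_ne_zero (sub_ne_zero.mpr hua)
  exact mul_ne_zero (mul_ne_zero h1 (pow_ne_zero 2 h2)) h3

lemma gfun_spec {u a t : ZMod p} (ht : t ≠ 0) (hg : gfun p (u, a) = t) :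
    u ≠ 0 ∧ a ≠ 0 ∧ u * a ≠ 1 ∧ u ≠ a ∧ a ≠ 1 ∧ (u * a⁻¹ - 1) * (a - 1) ^ 2 = t * (u * a - 1) := by
  unfold gfun at hg
  split_ifs at hg with h
  · exact absurd hg.symm ht
  · push_neg at h
    obtain ⟨h0, ha0, hua, hun, ha1⟩ := h
    refine ⟨h0, ha0, hua, hun, ha1, ?_⟩
    have hua' : u * a - 1 ≠ 0 := sub_ne_zero.mpr hua
    have hainv : a * a⁻¹ = 1 := mul_inv_cancel₀ ha0
    field_simp at hg
    linear_combination a⁻¹ * hg + ((a - 1) ^ 2 + t * (u * a - 1)) * hainv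

lemma gfun_eq_of {u a t : ZMod p} (h : ¬(u = 0 ∨ a = 0 ∨ u * a = 1 ∨ u = a ∨ a = 1))
    (heq : (u * a⁻¹ - 1) * (a - 1) ^ 2 = t * (u * a - 1)) : gfun p (u, a) = t := by
  push_neg at h
  rw [gfun_eq_of_ne (by push_neg; exact h)]
  have hinv : (u * a - 1) * (u * a - 1)⁻¹ = 1 :=
    mul_inv_cancel₀ (sub_ne_zero.mpr h.2.2.1)
  linear_combination (u * a - 1)⁻¹ * heq + t * hinv

lemma sq_ne_one {a : ZMod p} (ha1 : a ≠ 1) (ham : a ≠ -1) : a * a ≠ 1 := by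
  intro h
  rcases mul_self_eq_one_iff.mp h with h | h
  · exact ha1 h
  · exact ham h

lemma sum_u_main {t a : ZMod p} (ht : t ≠ 0) (ha0 : a ≠ 0) (ha1 : a ≠ 1) (ham : a ≠ -1) :
    (∑ u : ZMod p, if gfun p (u, a) = t then (1 : ℂ) else 0)
      = if (a - 1) ^ 2 = t ∨ (a - 1) ^ 2 = t * a ^ 2 then 0 else 1 := by
  have ha2 : a * a ≠ 1 := sq_ne_one ha1 ham
  have hainv : a * a⁻¹ = 1 := mul_inv_cancel₀ ha0
  by_cases hc : (a - 1) ^ 2 = t ∨ (a - 1) ^ 2 = t * a ^ 2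
  · rw [if_pos hc]
    apply Finset.sum_eq_zero
    intro u _
    rw [if_neg]
    intro hg
    obtain ⟨h0, -, hua, hun, -, heq⟩ := gfun_spec ht hg
    rcases hc with h1 | h2
    · have h3 : (u * a⁻¹ - 1) * (a - 1) ^ 2 = (u * a - 1) * (a - 1) ^ 2 := by
        linear_combination heq - (u * a - 1) * h1
      have h4 : u * a⁻¹ = u * a := by
        have := mul_right_cancel₀ (pow_ne_zero 2 (sub_ne_zero.mpr ha1)) h3
        linear_combination this
      have h5 : a⁻¹ = a := mul_left_cancel₀ h0 h4
      rw [h5] at hainv; exact ha2 hainv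
    · have h3 : t * ((u * a⁻¹ - 1) * a ^ 2) = t * (u * a - 1) := by
        linear_combination heq - (u * a⁻¹ - 1) * h2
      have h4 : (u * a⁻¹ - 1) * a ^ 2 = u * a - 1 := mul_left_cancel₀ ht h3
      exact ha2 (by linear_combination -h4 + u * a * hainv)
  · push_neg at hc
    obtain ⟨h1, h2⟩ := hc
    rw [if_neg (by push_neg; exact ⟨h1, h2⟩)]
    have hDne : (a - 1) ^ 2 - t * a ^ 2 ≠ 0 := sub_ne_zero.mpr h2
    have hDD : ((a - 1) ^ 2 - t * a ^ 2) * ((a - 1) ^ 2 - t * a ^ 2)⁻¹ = 1 :=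
      mul_inv_cancel₀ hDne
    set u₀ : ZMod p := a * ((a - 1) ^ 2 - t) * ((a - 1) ^ 2 - t * a ^ 2)⁻¹ with hu₀
    have hiff : ∀ u : ZMod p, gfun p (u, a) = t ↔ u = u₀ := by
      intro u
      constructor
      · intro hg
        obtain ⟨h0, -, hua, hun, -, heq⟩ := gfun_spec ht hg
        have hk : u * ((a - 1) ^ 2 - t * a ^ 2) = a * ((a - 1) ^ 2 - t) := by
          linear_combination a * heq - u * (a - 1) ^ 2 * hainv
        calc u = u * ((a - 1) ^ 2 - t * a ^ 2) * ((a - 1) ^ 2 - t * a ^ 2)⁻¹ := by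
                rw [mul_assoc, hDD, mul_one]
          _ = u₀ := by rw [hk]
      · rintro rfl
        have hu0 : u₀ ≠ 0 :=
          mul_ne_zero (mul_ne_zero ha0 (sub_ne_zero.mpr h1)) (inv_ne_zero hDne)
        have hu0a : u₀ ≠ a := by
          intro h
          have h' : u₀ * ((a - 1) ^ 2 - t * a ^ 2) = a * ((a - 1) ^ 2 - t * a ^ 2) := by
            rw [h]
          rw [hu₀] at h'
          have h'' : a * ((a - 1) ^ 2 - t) = a * ((a - 1) ^ 2 - t * a ^ 2) := by
            linear_combination h' - a * ((a - 1) ^ 2 - t) * hDD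
          have h3 : (a - 1) ^ 2 - t = (a - 1) ^ 2 - t * a ^ 2 := mul_left_cancel₀ ha0 h''
          have h4 : t * (a * a) = t * 1 := by linear_combination h3
          exact ha2 (mul_left_cancel₀ ht h4)
        have hu0m : u₀ * a ≠ 1 := by
          intro h
          have h' : u₀ * a * ((a - 1) ^ 2 - t * a ^ 2) = (a - 1) ^ 2 - t * a ^ 2 := by
            rw [h, one_mul]
          rw [hu₀] at h'
          have h'' : a ^ 2 * ((a - 1) ^ 2 - t) = (a - 1) ^ 2 - t * a ^ 2 := by
            linear_combination h' - a ^ 2 * ((a - 1) ^ 2 - t) * hDD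
          have h4 : (a - 1) ^ 2 * (a * a) = (a - 1) ^ 2 * 1 := by linear_combination h''
          exact ha2 (mul_left_cancel₀ (pow_ne_zero 2 (sub_ne_zero.mpr ha1)) h4)
        apply gfun_eq_of (by push_neg; exact ⟨hu0, ha0, hu0m, hu0a, ha1⟩)
        rw [hu₀]
        linear_combination ((a - 1) ^ 2 - t) * (a - 1) ^ 2 * ((a - 1) ^ 2 - t * a ^ 2)⁻¹ * hainv
          + ((a - 1) ^ 2 - t) * hDD
    calc (∑ u : ZMod p, if gfun p (u, a) = t then (1 : ℂ) else 0)
        = ∑ u : ZMod p, if u = u₀ then (1 : ℂ) else 0 :=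
          Finset.sum_congr rfl fun u _ => if_congr (hiff u) rfl rfl
      _ = 1 := by rw [Finset.sum_ite_eq' univ u₀ (fun _ => (1 : ℂ))]; simp


lemma gfun_neg_one (hp : 3 < p) (u : ZMod p) :
    gfun p (u, (-1 : ZMod p)) = if u = 0 ∨ u = -1 then 0 else 4 := by
  by_cases h : u = 0 ∨ u = -1
  · rw [if_pos h]
    unfold gfun
    rw [if_pos]
    rcases h with h | h
    · exact Or.inl h
    · exact Or.inr (Or.inr (Or.inr (Or.inl h)))
  · rw [if_neg h]
    push_neg at h
    obtain ⟨h0, hm⟩ := h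
    have hne : u * (-1 : ZMod p) - 1 ≠ 0 := by
      intro h; apply hm; linear_combination -h
    rw [gfun_eq_of_ne]
    · rw [inv_neg, inv_one]
      calc (u * -1 - 1) * ((-1 : ZMod p) - 1) ^ 2 * (u * -1 - 1)⁻¹
          = (u * -1 - 1) * (u * -1 - 1)⁻¹ * ((-1 : ZMod p) - 1) ^ 2 := by ring
        _ = 4 := by rw [mul_inv_cancel₀ hne]; ring
    · push_neg
      refine ⟨h0, neg_one_ne_zero' hp, ?_, hm, neg_one_ne_one hp⟩
      intro h; apply hm; linear_combination -h

lemma sum_u_neg_one (hp : 3 < p) {t : ZMod p} (ht : t ≠ 0) :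
    (∑ u : ZMod p, if gfun p (u, (-1 : ZMod p)) = t then (1 : ℂ) else 0)
      = if t = 4 then (p : ℂ) - 2 else 0 := by
  have h40 : (4 : ZMod p) ≠ 0 := four_ne hp
  have h0m : (0 : ZMod p) ≠ -1 := fun h => neg_one_ne_zero' hp h.symm
  by_cases ht4 : t = 4
  · subst ht4
    rw [if_pos rfl]
    have point : ∀ u : ZMod p,
        (if gfun p (u, (-1 : ZMod p)) = 4 then (1 : ℂ) else 0)
          = 1 - (if u = 0 then 1 else 0) - (if u = -1 then 1 else 0) := by
      intro u
      rw [gfun_neg_one hp]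
      by_cases h0 : u = 0
      · subst h0
        rw [if_pos (Or.inl rfl), if_neg (show (0 : ZMod p) ≠ 4 from fun hh => h40 hh.symm),
          if_pos rfl, if_neg h0m]
        ring
      · by_cases hm : u = -1
        · subst hm
          rw [if_pos (Or.inr rfl), if_neg (show (0 : ZMod p) ≠ 4 from fun hh => h40 hh.symm),
            if_neg (neg_one_ne_zero' hp), if_pos rfl]
          ring
        · rw [if_neg (not_or.mpr ⟨h0, hm⟩), if_pos rfl, if_neg h0, if_neg hm]
          ring
    rw [Finset.sum_congr rfl fun u _ => point u]
    simp [Finset.sum_sub_distrib, Finset.sum_ite_eq', ZMod.card]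
    ring
  · rw [if_neg ht4]
    apply Finset.sum_eq_zero
    intro u _
    rw [gfun_neg_one hp]
    by_cases h : u = 0 ∨ u = -1
    · rw [if_pos h, if_neg (fun hh => ht hh.symm)]
    · rw [if_neg h, if_neg (fun hh => ht4 hh.symm)]

lemma sum_u_degenerate {t a : ZMod p} (ht : t ≠ 0) (h : a = 0 ∨ a = 1) :
    (∑ u : ZMod p, if gfun p (u, a) = t then (1 : ℂ) else 0) = 0 := by
  apply Finset.sum_eq_zero
  intro u _
  rw [if_neg]
  intro hg
  unfold gfun at hg
  rw [if_pos] at hg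
  · exact ht hg.symm
  · rcases h with h | h
    · exact Or.inr (Or.inl h)
    · exact Or.inr (Or.inr (Or.inr (Or.inr h)))

noncomputable def r1 (p : ℕ) [Fact p.Prime] (t : ZMod p) : ℂ :=
  ∑ a : ZMod p, if ¬(a = 0 ∨ a = 1 ∨ a = -1) ∧ (a - 1) ^ 2 = t then 1 else 0

noncomputable def r2 (p : ℕ) [Fact p.Prime] (t : ZMod p) : ℂ :=
  ∑ a : ZMod p, if ¬(a = 0 ∨ a = 1 ∨ a = -1) ∧ (a - 1) ^ 2 = t * a ^ 2 then 1 else 0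

lemma count_V (hp : 3 < p) :
    (∑ a : ZMod p, if a = 0 ∨ a = 1 ∨ a = -1 then (0 : ℂ) else 1) = (p : ℂ) - 3 := by
  have d01 : (0 : ZMod p) ≠ 1 := zero_ne_one
  have d0m : (0 : ZMod p) ≠ -1 := fun h => neg_one_ne_zero' hp h.symm
  have d1m : (1 : ZMod p) ≠ -1 := fun h => neg_one_ne_one hp h.symm
  have point : ∀ a : ZMod p, (if a = 0 ∨ a = 1 ∨ a = -1 then (0 : ℂ) else 1)
      = 1 - (if a = 0 then 1 else 0) - (if a = 1 then 1 else 0)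
        - (if a = -1 then 1 else 0) := by
    intro a
    by_cases h0 : a = 0
    · subst h0; simp [d01, d0m]
    · by_cases h1 : a = 1
      · subst h1; simp [d01.symm, d1m]
      · by_cases hm : a = -1
        · subst hm; simp [d0m.symm, d1m.symm]
        · simp [h0, h1, hm]
  rw [Finset.sum_congr rfl fun a _ => point a]
  simp [Finset.sum_sub_distrib, Finset.sum_ite_eq', ZMod.card]
  ring

lemma nn_eq (hp : 3 < p) {t : ZMod p} (ht : t ≠ 0) :
    (∑ x : ZMod p × ZMod p, if gfun p x = t then (1 : ℂ) else 0)
      = (if t = 4 then (p : ℂ) - 2 else 0) + ((p : ℂ) - 3) - r1 p t - r2 p t := by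
  have d0m : (0 : ZMod p) ≠ -1 := fun h => neg_one_ne_zero' hp h.symm
  have d1m : (1 : ZMod p) ≠ -1 := fun h => neg_one_ne_one hp h.symm
  have point : ∀ a : ZMod p, (∑ u : ZMod p, if gfun p (u, a) = t then (1 : ℂ) else 0)
      = (if a = -1 then (if t = 4 then (p : ℂ) - 2 else 0) else 0)
        + (if a = 0 ∨ a = 1 ∨ a = -1 then (0 : ℂ) else 1)
        - (if ¬(a = 0 ∨ a = 1 ∨ a = -1) ∧ (a - 1) ^ 2 = t then (1 : ℂ) else 0)
        - (if ¬(a = 0 ∨ a = 1 ∨ a = -1) ∧ (a - 1) ^ 2 = t * a ^ 2 then (1 : ℂ) else 0) := by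
    intro a
    by_cases h0 : a = 0 ∨ a = 1
    · rw [sum_u_degenerate ht h0]
      rcases h0 with h | h <;> subst h <;> simp [d0m, d1m]
    · push_neg at h0
      obtain ⟨ha0, ha1⟩ := h0
      by_cases hm : a = -1
      · subst hm
        rw [sum_u_neg_one hp ht]
        simp
      · rw [sum_u_main ht ha0 ha1 hm]
        have hV : ¬(a = 0 ∨ a = 1 ∨ a = -1) := by push_neg; exact ⟨ha0, ha1, hm⟩
        rw [if_neg hm, if_neg hV]
        by_cases hP : (a - 1) ^ 2 = t <;> by_cases hQ : (a - 1) ^ 2 = t * a ^ 2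
        · exfalso
          have h4 : t * 1 = t * (a * a) := by linear_combination hQ - hP
          exact sq_ne_one ha1 hm (mul_left_cancel₀ ht h4).symm
        · rw [if_pos (Or.inl hP), if_pos ⟨hV, hP⟩, if_neg (fun hh => hQ hh.2)]
          ring
        · rw [if_pos (Or.inr hQ), if_neg (fun hh => hP hh.2), if_pos ⟨hV, hQ⟩]
          ring
        · rw [if_neg (by push_neg; exact ⟨hP, hQ⟩), if_neg (fun hh => hP hh.2),
            if_neg (fun hh => hQ hh.2)]
          ring
  rw [Fintype.sum_prod_type_right]
  rw [Finset.sum_congr rfl fun a _ => point a]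
  simp only [Finset.sum_sub_distrib, Finset.sum_add_distrib]
  rw [count_V hp, Finset.sum_ite_eq' univ (-1 : ZMod p)
    (fun _ => if t = 4 then (p : ℂ) - 2 else 0)]
  rw [r1, r2]
  simp

lemma r2_eq_r1 (t : ZMod p) : r2 p t = r1 p t := by
  rw [r1, r2]
  refine Fintype.sum_equiv ⟨fun a : ZMod p => a⁻¹, fun a => a⁻¹, fun a => inv_inv a,
    fun a => inv_inv a⟩ _ _ fun a => ?_
  simp only [Equiv.coe_fn_mk]
  by_cases ha0 : a = 0
  · subst ha0
    rw [if_neg (fun hh : ¬((0:ZMod p) = 0 ∨ _) ∧ _ => hh.1 (Or.inl rfl)),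
        if_neg (fun hh : ¬((0:ZMod p)⁻¹ = 0 ∨ _) ∧ _ => hh.1 (Or.inl inv_zero))]
  · have hainv : a⁻¹ * a = 1 := inv_mul_cancel₀ ha0
    refine if_congr (and_congr ?_ ?_) rfl rfl
    · rw [inv_eq_zero, inv_eq_one, inv_eq_iff_eq_inv, inv_neg, inv_one]
    · constructor
      · intro h
        have key : (a⁻¹ - 1) ^ 2 * a ^ 2 = t * a ^ 2 := by
          linear_combination h + (a⁻¹ * a - 2 * a + 1) * hainv
        exact mul_right_cancel₀ (pow_ne_zero 2 ha0) key
      · intro h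
        linear_combination a ^ 2 * h - (a⁻¹ * a - 2 * a + 1) * hainv

lemma sq_sub_one_eq {a c : ZMod p} : (c - 1) ^ 2 = (a - 1) ^ 2 ↔ (c = a ∨ c = 2 - a) := by
  constructor
  · intro h
    have h2 : (c - a) * (c + a - 2) = 0 := by linear_combination h
    rcases mul_eq_zero.mp h2 with h' | h'
    · exact Or.inl (by linear_combination h')
    · exact Or.inr (by linear_combination h')
  · rintro (rfl | rfl)
    · rfl
    · ring

lemma sum_T_r1 (hp : 3 < p) :
    ∑ t ∈ univ.filter (fun t : ZMod p => t ≠ 0), r1 p t = (p : ℂ) - 3 := by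
  simp only [r1]
  rw [Finset.sum_comm]
  have point : ∀ a : ZMod p,
      (∑ t ∈ univ.filter (fun t : ZMod p => t ≠ 0),
        if ¬(a = 0 ∨ a = 1 ∨ a = -1) ∧ (a - 1) ^ 2 = t then (1 : ℂ) else 0)
      = if a = 0 ∨ a = 1 ∨ a = -1 then (0 : ℂ) else 1 := by
    intro a
    by_cases hV : a = 0 ∨ a = 1 ∨ a = -1
    · rw [if_pos hV]
      exact Finset.sum_eq_zero fun t _ => if_neg (fun hh => hh.1 hV)
    · rw [if_neg hV]
      push_neg at hV
      calc (∑ t ∈ univ.filter (fun t : ZMod p => t ≠ 0),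
            if ¬(a = 0 ∨ a = 1 ∨ a = -1) ∧ (a - 1) ^ 2 = t then (1 : ℂ) else 0)
          = ∑ t ∈ univ.filter (fun t : ZMod p => t ≠ 0),
            if t = (a - 1) ^ 2 then (1 : ℂ) else 0 :=
            Finset.sum_congr rfl fun t _ => if_congr
              ⟨fun h => h.2.symm, fun h => ⟨by push_neg; exact hV, h.symm⟩⟩ rfl rfl
        _ = 1 := by
            have hmem : ((a - 1) ^ 2) ∈ univ.filter (fun t : ZMod p => t ≠ 0) :=
              Finset.mem_filter.mpr ⟨Finset.mem_univ _, pow_ne_zero 2 (sub_ne_zero.mpr hV.2.1)⟩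
            rw [Finset.sum_ite_eq' _ ((a - 1) ^ 2) (fun _ => (1 : ℂ)), if_pos hmem]
  rw [Finset.sum_congr rfl fun a _ => point a]
  exact count_V hp

lemma count_V5 (hp : 3 < p) :
    (∑ a : ZMod p, if ¬(a = 0 ∨ a = 1 ∨ a = -1) ∧ ¬(2 - a = 0 ∨ 2 - a = 1 ∨ 2 - a = -1)
      then (1 : ℂ) else 0) = (p : ℂ) - 5 := by
  have h2 := two_ne hp
  have h3 := three_ne hp
  have h4 := four_ne hp
  have point : ∀ a : ZMod p,
      (if ¬(a = 0 ∨ a = 1 ∨ a = -1) ∧ ¬(2 - a = 0 ∨ 2 - a = 1 ∨ 2 - a = -1)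
        then (1 : ℂ) else 0)
      = 1 - (if a = 0 then 1 else 0) - (if a = 1 then 1 else 0) - (if a = -1 then 1 else 0)
        - (if a = 2 then 1 else 0) - (if a = 3 then 1 else 0) := by
    intro a
    have e2 : 2 - a = 0 ↔ a = 2 := by constructor <;> intro h <;> linear_combination -h
    have e1 : 2 - a = 1 ↔ a = 1 := by constructor <;> intro h <;> linear_combination -h
    have e3 : 2 - a = -1 ↔ a = 3 := by constructor <;> intro h <;> linear_combination -h
    have d01 : (0 : ZMod p) ≠ 1 := zero_ne_one
    have d0m : (0 : ZMod p) ≠ -1 := fun h => neg_one_ne_zero' hp h.symm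
    have d1m : (1 : ZMod p) ≠ -1 := fun h => neg_one_ne_one hp h.symm
    have d02 : (0 : ZMod p) ≠ 2 := fun h => h2 h.symm
    have d03 : (0 : ZMod p) ≠ 3 := fun h => h3 h.symm
    have d12 : (1 : ZMod p) ≠ 2 := fun h => one_ne_zero (by linear_combination -h)
    have d13 : (1 : ZMod p) ≠ 3 := fun h => h2 (by linear_combination -h)
    have dm2 : (-1 : ZMod p) ≠ 2 := fun h => h3 (by linear_combination -h)
    have dm3 : (-1 : ZMod p) ≠ 3 := fun h => h4 (by linear_combination -h)
    have d23 : (2 : ZMod p) ≠ 3 := fun h => one_ne_zero (by linear_combination -h)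
    by_cases k0 : a = 0
    · subst k0
      rw [if_neg (fun hh => hh.1 (Or.inl rfl)), if_pos rfl, if_neg d01, if_neg d0m,
        if_neg d02, if_neg d03]
      ring
    by_cases k1 : a = 1
    · subst k1
      rw [if_neg (fun hh => hh.1 (Or.inr (Or.inl rfl))), if_neg one_ne_zero, if_pos rfl,
        if_neg d1m, if_neg d12, if_neg d13]
      ring
    by_cases km : a = -1
    · subst km
      rw [if_neg (fun hh => hh.1 (Or.inr (Or.inr rfl))), if_neg (neg_one_ne_zero' hp),
        if_neg (neg_one_ne_one hp), if_pos rfl, if_neg dm2, if_neg dm3]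
      ring
    by_cases k2 : a = 2
    · subst k2
      rw [if_neg (fun hh => hh.2 (Or.inl (by ring))), if_neg (fun h => h2 h),
        if_neg (fun h => d12 h.symm), if_neg (fun h => dm2 h.symm), if_pos rfl, if_neg d23]
      ring
    by_cases k3 : a = 3
    · subst k3
      rw [if_neg (fun hh => hh.2 (Or.inr (Or.inr (by ring)))), if_neg (fun h => h3 h),
        if_neg (fun h => d13 h.symm), if_neg (fun h => dm3 h.symm), if_neg (fun h => d23 h.symm),
        if_pos rfl]
      ring
    · rw [if_pos, if_neg k0, if_neg k1, if_neg km, if_neg k2, if_neg k3]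
      · ring
      · constructor
        · push_neg; exact ⟨k0, k1, km⟩
        · push_neg
          exact ⟨fun hh => k2 (e2.mp hh), fun hh => k1 (e1.mp hh), fun hh => k3 (e3.mp hh)⟩
  rw [Finset.sum_congr rfl fun a _ => point a]
  simp [Finset.sum_sub_distrib, Finset.sum_ite_eq', ZMod.card]
  ring

lemma sum_T_r1_sq (hp : 3 < p) :
    ∑ t ∈ univ.filter (fun t : ZMod p => t ≠ 0), r1 p t * r1 p t
      = 2 * (p : ℂ) - 8 := by
  have h2 := two_ne hp
  simp only [r1, Finset.sum_mul_sum]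
  rw [Finset.sum_comm]
  have swap2 : ∀ a : ZMod p,
      (∑ t ∈ univ.filter (fun t : ZMod p => t ≠ 0), ∑ c : ZMod p,
        (if ¬(a = 0 ∨ a = 1 ∨ a = -1) ∧ (a - 1) ^ 2 = t then (1 : ℂ) else 0)
          * (if ¬(c = 0 ∨ c = 1 ∨ c = -1) ∧ (c - 1) ^ 2 = t then (1 : ℂ) else 0))
      = ∑ c : ZMod p, ∑ t ∈ univ.filter (fun t : ZMod p => t ≠ 0),
        (if ¬(a = 0 ∨ a = 1 ∨ a = -1) ∧ (a - 1) ^ 2 = t then (1 : ℂ) else 0)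
          * (if ¬(c = 0 ∨ c = 1 ∨ c = -1) ∧ (c - 1) ^ 2 = t then (1 : ℂ) else 0) :=
    fun a => Finset.sum_comm
  rw [Finset.sum_congr rfl fun a _ => swap2 a]
  have point : ∀ a c : ZMod p,
      (∑ t ∈ univ.filter (fun t : ZMod p => t ≠ 0),
        (if ¬(a = 0 ∨ a = 1 ∨ a = -1) ∧ (a - 1) ^ 2 = t then (1 : ℂ) else 0)
          * (if ¬(c = 0 ∨ c = 1 ∨ c = -1) ∧ (c - 1) ^ 2 = t then (1 : ℂ) else 0))
      = if ¬(a = 0 ∨ a = 1 ∨ a = -1) ∧ ¬(c = 0 ∨ c = 1 ∨ c = -1) ∧ (c - 1) ^ 2 = (a - 1) ^ 2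
          then (1 : ℂ) else 0 := by
    intro a c
    by_cases hC : ¬(a = 0 ∨ a = 1 ∨ a = -1) ∧ ¬(c = 0 ∨ c = 1 ∨ c = -1)
      ∧ (c - 1) ^ 2 = (a - 1) ^ 2
    · rw [if_pos hC]
      obtain ⟨hVa, hVc, hcc⟩ := hC
      push_neg at hVa
      calc (∑ t ∈ univ.filter (fun t : ZMod p => t ≠ 0),
            (if ¬(a = 0 ∨ a = 1 ∨ a = -1) ∧ (a - 1) ^ 2 = t then (1 : ℂ) else 0)
              * (if ¬(c = 0 ∨ c = 1 ∨ c = -1) ∧ (c - 1) ^ 2 = t then (1 : ℂ) else 0))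
          = ∑ t ∈ univ.filter (fun t : ZMod p => t ≠ 0),
            if t = (a - 1) ^ 2 then (1 : ℂ) else 0 := by
            refine Finset.sum_congr rfl fun t _ => ?_
            by_cases ht : t = (a - 1) ^ 2
            · subst ht
              rw [if_pos ⟨by push_neg; exact hVa, rfl⟩, if_pos ⟨hVc, hcc⟩, if_pos rfl]
              ring
            · rw [if_neg ht, if_neg (fun hh => ht hh.2.symm)]
              ring
        _ = 1 := by
            have hmem : ((a - 1) ^ 2) ∈ univ.filter (fun t : ZMod p => t ≠ 0) :=
              Finset.mem_filter.mpr ⟨Finset.mem_univ _, pow_ne_zero 2 (sub_ne_zero.mpr hVa.2.1)⟩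
            rw [Finset.sum_ite_eq' _ ((a - 1) ^ 2) (fun _ => (1 : ℂ)), if_pos hmem]
    · rw [if_neg hC]
      refine Finset.sum_eq_zero fun t _ => ?_
      by_cases h1 : ¬(a = 0 ∨ a = 1 ∨ a = -1) ∧ (a - 1) ^ 2 = t
      · rw [if_pos h1]
        rw [if_neg, mul_zero]
        intro h2'
        exact hC ⟨h1.1, h2'.1, by rw [h2'.2, h1.2]⟩
      · rw [if_neg h1, zero_mul]
  rw [Finset.sum_congr rfl fun a _ => Finset.sum_congr rfl fun c _ => point a c]
  have pointc : ∀ a : ZMod p,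
      (∑ c : ZMod p, if ¬(a = 0 ∨ a = 1 ∨ a = -1) ∧ ¬(c = 0 ∨ c = 1 ∨ c = -1)
        ∧ (c - 1) ^ 2 = (a - 1) ^ 2 then (1 : ℂ) else 0)
      = (if a = 0 ∨ a = 1 ∨ a = -1 then (0 : ℂ) else 1)
        + (if ¬(a = 0 ∨ a = 1 ∨ a = -1) ∧ ¬(2 - a = 0 ∨ 2 - a = 1 ∨ 2 - a = -1)
            then (1 : ℂ) else 0) := by
    intro a
    by_cases hVa : a = 0 ∨ a = 1 ∨ a = -1
    · rw [if_pos hVa, if_neg (fun hh => hh.1 hVa)]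
      rw [Finset.sum_eq_zero fun c _ => if_neg (fun hh => hh.1 hVa)]
      ring
    · rw [if_neg hVa]
      have ha1 : a ≠ 1 := by push_neg at hVa; exact hVa.2.1
      have hne2 : a ≠ 2 - a := by
        intro h
        exact ha1 (by
          have : 2 * a = 2 * 1 := by linear_combination h
          exact mul_left_cancel₀ h2 this)
      have pointcc : ∀ c : ZMod p,
          (if ¬(a = 0 ∨ a = 1 ∨ a = -1) ∧ ¬(c = 0 ∨ c = 1 ∨ c = -1)
            ∧ (c - 1) ^ 2 = (a - 1) ^ 2 then (1 : ℂ) else 0)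
          = (if c = a then 1 else 0)
            + (if c = 2 - a ∧ ¬(2 - a = 0 ∨ 2 - a = 1 ∨ 2 - a = -1) then (1 : ℂ) else 0) := by
        intro c
        by_cases hca : c = a
        · subst hca
          rw [if_pos ⟨hVa, hVa, rfl⟩, if_pos rfl, if_neg (fun hh => hne2 hh.1)]
          ring
        · rw [if_neg hca]
          by_cases hc2 : c = 2 - a
          · subst hc2
            by_cases hV2 : 2 - a = 0 ∨ 2 - a = 1 ∨ 2 - a = -1
            · rw [if_neg (fun hh => hh.2.1 hV2), if_neg (fun hh => hh.2 hV2)]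
              ring
            · rw [if_pos ⟨hVa, hV2, by ring⟩, if_pos ⟨rfl, hV2⟩]
              ring
          · rw [if_neg, if_neg (fun hh => hc2 hh.1)]
            · ring
            · intro hh
              rcases sq_sub_one_eq.mp hh.2.2 with h | h
              · exact hca h
              · exact hc2 h
      rw [Finset.sum_congr rfl fun c _ => pointcc c]
      rw [Finset.sum_add_distrib]
      rw [Finset.sum_ite_eq' univ a (fun _ => (1 : ℂ))]
      have : (∑ c : ZMod p, if c = 2 - a ∧ ¬(2 - a = 0 ∨ 2 - a = 1 ∨ 2 - a = -1)
          then (1 : ℂ) else 0)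
          = if ¬(2 - a = 0 ∨ 2 - a = 1 ∨ 2 - a = -1) then (1 : ℂ) else 0 := by
        by_cases hV2 : 2 - a = 0 ∨ 2 - a = 1 ∨ 2 - a = -1
        · rw [if_neg (fun hh => hh hV2)]
          exact Finset.sum_eq_zero fun c _ => if_neg (fun hh => hh.2 hV2)
        · rw [if_pos hV2]
          calc _ = ∑ c : ZMod p, if c = 2 - a then (1 : ℂ) else 0 :=
                Finset.sum_congr rfl fun c _ => if_congr
                  ⟨fun h => h.1, fun h => ⟨h, hV2⟩⟩ rfl rfl
            _ = 1 := by rw [Finset.sum_ite_eq' univ (2 - a) (fun _ => (1 : ℂ))]; simp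
      rw [this]
      simp only [Finset.mem_univ, if_true]
      by_cases hV2 : 2 - a = 0 ∨ 2 - a = 1 ∨ 2 - a = -1
      · rw [if_neg (fun hh => hh hV2), if_neg (fun hh => hh.2 hV2)]
      · rw [if_pos hV2, if_pos ⟨hVa, hV2⟩]
  rw [Finset.sum_congr rfl fun a _ => pointc a]
  rw [Finset.sum_add_distrib, count_V hp, count_V5 hp]
  ring

lemma r1_four (hp : 3 < p) : r1 p 4 = 1 := by
  have h2 := two_ne hp
  have h3 := three_ne hp
  have h4 := four_ne hp
  have h31 : (3 : ZMod p) ≠ 1 := fun h => h2 (by linear_combination h)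
  have h3m : (3 : ZMod p) ≠ -1 := fun h => h4 (by linear_combination h)
  have key : ∀ a : ZMod p, (a - 1) ^ 2 = 4 ↔ (a = 3 ∨ a = 2 - 3) := by
    intro a
    have : ((3 : ZMod p) - 1) ^ 2 = 4 := by ring
    rw [← this]
    exact sq_sub_one_eq
  rw [r1]
  have point : ∀ a : ZMod p,
      (if ¬(a = 0 ∨ a = 1 ∨ a = -1) ∧ (a - 1) ^ 2 = 4 then (1 : ℂ) else 0)
      = if a = 3 then 1 else 0 := by
    intro a
    by_cases ha : a = 3
    · subst ha
      rw [if_pos ⟨by push_neg; exact ⟨h3, h31, h3m⟩, by ring⟩, if_pos rfl]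
    · rw [if_neg ha, if_neg]
      intro hh
      rcases (key a).mp hh.2 with h | h
      · exact ha h
      · apply hh.1
        right; right
        rw [h]; ring
  rw [Finset.sum_congr rfl fun a _ => point a]
  rw [Finset.sum_ite_eq' univ (3 : ZMod p) (fun _ => (1 : ℂ))]
  simp

lemma count_T : (∑ t ∈ univ.filter (fun t : ZMod p => t ≠ 0), (1 : ℂ)) = (p : ℂ) - 1 := by
  rw [Finset.sum_filter]
  have point : ∀ t : ZMod p, (if t ≠ 0 then (1 : ℂ) else 0) = 1 - (if t = 0 then 1 else 0) := by
    intro t; by_cases h : t = 0 <;> simp [h]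
  rw [Finset.sum_congr rfl fun t _ => point t]
  simp [Finset.sum_sub_distrib, Finset.sum_ite_eq', ZMod.card]
lemma Ncount (hp : 3 < p) :
    (∑ x : (ZMod p × ZMod p) × (ZMod p × ZMod p),
      if gfun p x.1 = gfun p x.2 ∧ gfun p x.1 ≠ 0 then (1 : ℂ) else 0)
    = (p : ℂ) ^ 3 - 8 * (p : ℂ) ^ 2 + 29 * (p : ℂ) - 53 := by
  have h40 : (4 : ZMod p) ≠ 0 := four_ne hp
  have pt : ∀ x : (ZMod p × ZMod p) × (ZMod p × ZMod p),
      (if gfun p x.1 = gfun p x.2 ∧ gfun p x.1 ≠ 0 then (1 : ℂ) else 0)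
      = ∑ t ∈ univ.filter (fun t : ZMod p => t ≠ 0),
          (if gfun p x.1 = t then (1 : ℂ) else 0) * (if gfun p x.2 = t then (1 : ℂ) else 0) := by
    intro x
    by_cases h : gfun p x.1 = gfun p x.2 ∧ gfun p x.1 ≠ 0
    · rw [if_pos h]
      have hmem : gfun p x.1 ∈ univ.filter (fun t : ZMod p => t ≠ 0) :=
        Finset.mem_filter.mpr ⟨Finset.mem_univ _, h.2⟩
      calc (1 : ℂ)
          = ∑ t ∈ univ.filter (fun t : ZMod p => t ≠ 0),
              if t = gfun p x.1 then (1 : ℂ) else 0 := by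
            rw [Finset.sum_ite_eq' _ (gfun p x.1) (fun _ => (1 : ℂ)), if_pos hmem]
        _ = _ := by
            refine Finset.sum_congr rfl fun t _ => ?_
            by_cases ht : t = gfun p x.1
            · rw [if_pos ht, if_pos ht.symm,
                if_pos (show gfun p x.2 = t by rw [← h.1]; exact ht.symm), one_mul]
            · rw [if_neg ht, if_neg (fun hh => ht hh.symm), zero_mul]
    · rw [if_neg h]
      symm
      refine Finset.sum_eq_zero fun t htm => ?_
      have htne : t ≠ 0 := (Finset.mem_filter.mp htm).2
      by_cases h1 : gfun p x.1 = t
      · rw [if_pos h1, if_neg, mul_zero]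
        intro h2'
        exact h ⟨by rw [h1, h2'], by rw [h1]; exact htne⟩
      · rw [if_neg h1, zero_mul]
  rw [Finset.sum_congr rfl fun x _ => pt x]
  rw [Finset.sum_comm]
  have prod_split : ∀ t : ZMod p,
      (∑ x : (ZMod p × ZMod p) × (ZMod p × ZMod p),
        (if gfun p x.1 = t then (1 : ℂ) else 0) * (if gfun p x.2 = t then (1 : ℂ) else 0))
      = (∑ y : ZMod p × ZMod p, if gfun p y = t then (1 : ℂ) else 0)
          * (∑ y : ZMod p × ZMod p, if gfun p y = t then (1 : ℂ) else 0) := by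
    intro t
    rw [Finset.sum_mul_sum]
    rw [Fintype.sum_prod_type]
  rw [Finset.sum_congr rfl fun t _ => prod_split t]
  have nn_pt : ∀ t ∈ univ.filter (fun t : ZMod p => t ≠ 0),
      (∑ y : ZMod p × ZMod p, if gfun p y = t then (1 : ℂ) else 0)
        * (∑ y : ZMod p × ZMod p, if gfun p y = t then (1 : ℂ) else 0)
      = (((p : ℂ) - 3) - 2 * r1 p t) * (((p : ℂ) - 3) - 2 * r1 p t)
        + (if t = 4 then 2 * ((p : ℂ) - 2) * (((p : ℂ) - 3) - 2 * r1 p t)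
            + ((p : ℂ) - 2) * ((p : ℂ) - 2) else 0) := by
    intro t htm
    have htne : t ≠ 0 := (Finset.mem_filter.mp htm).2
    rw [nn_eq hp htne, r2_eq_r1]
    by_cases h4 : t = 4
    · rw [if_pos h4, if_pos h4]; ring
    · rw [if_neg h4, if_neg h4]; ring
  rw [Finset.sum_congr rfl nn_pt]
  rw [Finset.sum_add_distrib]
  have correction : (∑ t ∈ univ.filter (fun t : ZMod p => t ≠ 0),
      if t = 4 then 2 * ((p : ℂ) - 2) * (((p : ℂ) - 3) - 2 * r1 p t)
        + ((p : ℂ) - 2) * ((p : ℂ) - 2) else 0)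
      = 2 * ((p : ℂ) - 2) * (((p : ℂ) - 3) - 2 * r1 p 4)
        + ((p : ℂ) - 2) * ((p : ℂ) - 2) := by
    have hmem4 : (4 : ZMod p) ∈ univ.filter (fun t : ZMod p => t ≠ 0) :=
      Finset.mem_filter.mpr ⟨Finset.mem_univ _, h40⟩
    rw [Finset.sum_ite_eq' _ (4 : ZMod p)
      (fun t => 2 * ((p : ℂ) - 2) * (((p : ℂ) - 3) - 2 * r1 p t)
        + ((p : ℂ) - 2) * ((p : ℂ) - 2)), if_pos hmem4]
  rw [correction, r1_four hp]
  have main_sq : (∑ t ∈ univ.filter (fun t : ZMod p => t ≠ 0),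
      (((p : ℂ) - 3) - 2 * r1 p t) * (((p : ℂ) - 3) - 2 * r1 p t))
      = ((p : ℂ) - 3) * ((p : ℂ) - 3) * (((p : ℂ)) - 1)
        - 4 * ((p : ℂ) - 3) * (((p : ℂ)) - 3) + 4 * (2 * (p : ℂ) - 8) := by
    have expand : ∀ t : ZMod p,
        (((p : ℂ) - 3) - 2 * r1 p t) * (((p : ℂ) - 3) - 2 * r1 p t)
        = ((p : ℂ) - 3) * ((p : ℂ) - 3) * 1 - 4 * ((p : ℂ) - 3) * r1 p t
          + 4 * (r1 p t * r1 p t) := fun t => by ring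
    rw [Finset.sum_congr rfl fun t _ => expand t]
    rw [Finset.sum_add_distrib, Finset.sum_sub_distrib, ← Finset.mul_sum, ← Finset.mul_sum,
      ← Finset.mul_sum, count_T, sum_T_r1 hp, sum_T_r1_sq hp]
  rw [main_sq]
  ring

lemma conj_apply (ψ : DirichletCharacter ℂ p) (x : ZMod p) :
    (starRingEnd ℂ) (ψ x) = ψ x⁻¹ := by
  rw [show (starRingEnd ℂ) (ψ x) = star (ψ x) from rfl, MulChar.star_apply', MulChar.inv_apply']

lemma char_sum (hp : 3 < p) {u a v b : ZMod p} (hu : u ≠ 0) (ha : a ≠ 0) (hv : v ≠ 0)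
    (hb : b ≠ 0) :
    (∑ ψ : DirichletCharacter ℂ p,
      (starRingEnd ℂ) (ψ (u * a - 1)) * ψ (u * a⁻¹ - 1) * ψ (a - 1) ^ 2 *
        ((starRingEnd ℂ) ((starRingEnd ℂ) (ψ (v * b - 1)) * ψ (v * b⁻¹ - 1) * ψ (b - 1) ^ 2)))
    = if gfun p (u, a) = gfun p (v, b) ∧ gfun p (u, a) ≠ 0 then (p : ℂ) - 1 else 0 := by
  set Z : ZMod p := (u * a⁻¹ - 1) * (a - 1) ^ 2 * (v * b - 1) *
    ((u * a - 1)⁻¹ * ((v * b⁻¹ - 1)⁻¹ * ((b - 1)⁻¹) ^ 2)) with hZ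
  have hψ : ∀ ψ : DirichletCharacter ℂ p,
      (starRingEnd ℂ) (ψ (u * a - 1)) * ψ (u * a⁻¹ - 1) * ψ (a - 1) ^ 2 *
        ((starRingEnd ℂ) ((starRingEnd ℂ) (ψ (v * b - 1)) * ψ (v * b⁻¹ - 1) * ψ (b - 1) ^ 2))
      = ψ Z := by
    intro ψ
    rw [hZ]
    simp only [map_mul, map_pow, Complex.conj_conj]
    rw [conj_apply ψ (u * a - 1), conj_apply ψ (v * b⁻¹ - 1), conj_apply ψ (b - 1)]
    ring
  rw [Finset.sum_congr rfl fun ψ _ => hψ ψ]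
  rw [DirichletCharacter.sum_characters_eq ℂ Z]
  have htot : ((p.totient : ℂ)) = (p : ℂ) - 1 := by
    rw [Nat.totient_prime (Fact.out : p.Prime)]
    push_cast [Nat.cast_sub (Nat.one_le_iff_ne_zero.mpr (Fact.out : p.Prime).ne_zero)]
    ring
  rw [htot]
  refine if_congr ?_ rfl rfl
  constructor
  · intro hz
    rw [hZ] at hz
    have hZne : (u * a⁻¹ - 1) * (a - 1) ^ 2 * (v * b - 1) *
        ((u * a - 1)⁻¹ * ((v * b⁻¹ - 1)⁻¹ * ((b - 1)⁻¹) ^ 2)) ≠ 0 := by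
      rw [hz]; exact one_ne_zero
    have h1 : u * a⁻¹ - 1 ≠ 0 := fun h => hZne (by rw [h]; ring)
    have h2 : a - 1 ≠ 0 := fun h => hZne (by rw [h]; ring)
    have h3 : v * b - 1 ≠ 0 := fun h => hZne (by rw [h]; ring)
    have h4 : u * a - 1 ≠ 0 := fun h => hZne (by rw [h, inv_zero]; ring)
    have h5 : v * b⁻¹ - 1 ≠ 0 := fun h => hZne (by rw [h, inv_zero]; ring)
    have h6 : b - 1 ≠ 0 := fun h => hZne (by rw [h, inv_zero]; ring)
    have huna : u ≠ a := by
      intro h; subst h; exact h1 (by rw [mul_inv_cancel₀ ha]; ring)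
    have hvnb : v ≠ b := by
      intro h; subst h; exact h5 (by rw [mul_inv_cancel₀ hb]; ring)
    have hua1 : u * a ≠ 1 := fun h => h4 (by rw [h]; ring)
    have hvb1 : v * b ≠ 1 := fun h => h3 (by rw [h]; ring)
    have ha1 : a ≠ 1 := fun h => h2 (by rw [h]; ring)
    have hb1 : b ≠ 1 := fun h => h6 (by rw [h]; ring)
    have cA : (u * a - 1) * (u * a - 1)⁻¹ = 1 := mul_inv_cancel₀ h4
    have cC : (v * b⁻¹ - 1) * (v * b⁻¹ - 1)⁻¹ = 1 := mul_inv_cancel₀ h5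
    have cD : (b - 1) * (b - 1)⁻¹ = 1 := mul_inv_cancel₀ h6
    have hWM : (u * a⁻¹ - 1) * (a - 1) ^ 2 * (v * b - 1)
        = (u * a - 1) * ((v * b⁻¹ - 1) * (b - 1) ^ 2) := by
      linear_combination ((u * a - 1) * ((v * b⁻¹ - 1) * (b - 1) ^ 2)) * hz
        - ((u * a⁻¹ - 1) * (a - 1) ^ 2 * (v * b - 1)) * cA
        - ((u * a⁻¹ - 1) * (a - 1) ^ 2 * (v * b - 1) * ((u * a - 1) * (u * a - 1)⁻¹)) * cC
        - ((u * a⁻¹ - 1) * (a - 1) ^ 2 * (v * b - 1) * ((u * a - 1) * (u * a - 1)⁻¹)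
            * ((v * b⁻¹ - 1) * (v * b⁻¹ - 1)⁻¹) * (1 + (b - 1) * (b - 1)⁻¹)) * cD
    have hgu : gfun p (u, a) = (u * a⁻¹ - 1) * (a - 1) ^ 2 * (u * a - 1)⁻¹ :=
      gfun_eq_of_ne (by push_neg; exact ⟨hu, ha, hua1, huna, ha1⟩)
    have hgv : gfun p (v, b) = gfun p (u, a) := by
      apply gfun_eq_of (by push_neg; exact ⟨hv, hb, hvb1, hvnb, hb1⟩)
      rw [hgu]
      linear_combination (-(u * a - 1)⁻¹) * hWM - ((v * b⁻¹ - 1) * (b - 1) ^ 2) * cA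
    exact ⟨hgv.symm, gfun_ne_zero (by push_neg; exact ⟨hu, ha, hua1, huna, ha1⟩)⟩
  · rintro ⟨hgeq, hgne⟩
    obtain ⟨-, -, hua1, huna, ha1, E1⟩ := gfun_spec hgne rfl
    obtain ⟨-, -, hvb1, hvnb, hb1, E2⟩ := gfun_spec (hgeq ▸ hgne) hgeq.symm
    rw [hgeq] at E2
    have h4 : u * a - 1 ≠ 0 := sub_ne_zero.mpr hua1
    have h5 : v * b⁻¹ - 1 ≠ 0 := by
      intro h
      apply hvnb
      have : v * b⁻¹ * b = 1 * b := by rw [show v * b⁻¹ = 1 from by linear_combination h]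
      rw [inv_mul_cancel_right₀ hb, one_mul] at this
      exact this
    have h6 : b - 1 ≠ 0 := sub_ne_zero.mpr hb1
    have cA : (u * a - 1) * (u * a - 1)⁻¹ = 1 := mul_inv_cancel₀ h4
    have cC : (v * b⁻¹ - 1) * (v * b⁻¹ - 1)⁻¹ = 1 := mul_inv_cancel₀ h5
    have cD : (b - 1) * (b - 1)⁻¹ = 1 := mul_inv_cancel₀ h6
    have hWM : (u * a⁻¹ - 1) * (a - 1) ^ 2 * (v * b - 1)
        = (u * a - 1) * ((v * b⁻¹ - 1) * (b - 1) ^ 2) := by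
      linear_combination (v * b - 1) * E1 - (u * a - 1) * E2 + ((u * a - 1) * (v * b - 1)) * hgeq
    rw [hZ]
    linear_combination ((u * a - 1)⁻¹ * ((v * b⁻¹ - 1)⁻¹ * ((b - 1)⁻¹) ^ 2)) * hWM
      + cA + ((u * a - 1) * (u * a - 1)⁻¹) * cC
      + ((u * a - 1) * (u * a - 1)⁻¹ * ((v * b⁻¹ - 1) * (v * b⁻¹ - 1)⁻¹)
          * (1 + (b - 1) * (b - 1)⁻¹)) * cD

lemma gfun_coords_ne_zero {y : ZMod p × ZMod p} (h : gfun p y ≠ 0) : y.1 ≠ 0 ∧ y.2 ≠ 0 := by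
  constructor
  · intro h'
    exact h (by unfold gfun; rw [if_pos (Or.inl h')])
  · intro h'
    exact h (by unfold gfun; rw [if_pos (Or.inr (Or.inl h'))])

end Stmt4Aux

open Stmt4Aux in
theorem stmt_4 (p : ℕ) [Fact p.Prime] (hp : 3 < p) :
    ∑ ψ : DirichletCharacter ℂ p,
      (‖∑ u ∈ univ.filter (fun u : ZMod p => u ≠ 0),
        ∑ a ∈ univ.filter (fun a : ZMod p => a ≠ 0),
          (starRingEnd ℂ) (ψ (u * a - 1)) * ψ (u * a⁻¹ - 1) * ψ (a - 1) ^ 2‖) ^ 2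
      = (p - 1) * (p ^ 3 - 8 * p ^ 2 + 29 * p - 53) := by
  set U : Finset (ZMod p) := univ.filter (fun u : ZMod p => u ≠ 0) with hU
  set f : DirichletCharacter ℂ p → ZMod p → ZMod p → ℂ :=
    fun ψ u a => (starRingEnd ℂ) (ψ (u * a - 1)) * ψ (u * a⁻¹ - 1) * ψ (a - 1) ^ 2 with hf
  set P : Finset ((ZMod p × ZMod p) × (ZMod p × ZMod p)) := (U ×ˢ U) ×ˢ (U ×ˢ U) with hP
  have step2 : (∑ ψ : DirichletCharacter ℂ p,
      (∑ u ∈ U, ∑ a ∈ U, f ψ u a) * (starRingEnd ℂ) (∑ u ∈ U, ∑ a ∈ U, f ψ u a))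
      = ((p : ℂ) - 1) * ((p : ℂ) ^ 3 - 8 * (p : ℂ) ^ 2 + 29 * (p : ℂ) - 53) := by
    have expand : ∀ ψ : DirichletCharacter ℂ p,
        (∑ u ∈ U, ∑ a ∈ U, f ψ u a) * (starRingEnd ℂ) (∑ u ∈ U, ∑ a ∈ U, f ψ u a)
        = ∑ x ∈ P, f ψ x.1.1 x.1.2 * (starRingEnd ℂ) (f ψ x.2.1 x.2.2) := by
      intro ψ
      rw [map_sum]
      simp only [map_sum]
      rw [← Finset.sum_product' (f := fun u a => f ψ u a),
        ← Finset.sum_product' (f := fun v b => (starRingEnd ℂ) (f ψ v b)),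
        Finset.sum_mul_sum]
      exact (Finset.sum_product' (s := U ×ˢ U) (t := U ×ˢ U)
        (f := fun (x y : ZMod p × ZMod p) =>
          f ψ x.1 x.2 * (starRingEnd ℂ) (f ψ y.1 y.2))).symm
    rw [Finset.sum_congr rfl fun ψ _ => expand ψ]
    rw [Finset.sum_comm]
    have point : ∀ x ∈ P,
        (∑ ψ : DirichletCharacter ℂ p, f ψ x.1.1 x.1.2 * (starRingEnd ℂ) (f ψ x.2.1 x.2.2))
        = if gfun p x.1 = gfun p x.2 ∧ gfun p x.1 ≠ 0 then (p : ℂ) - 1 else 0 := by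
      intro x hx
      rw [hP] at hx
      obtain ⟨hx1, hx2⟩ := Finset.mem_product.mp hx
      obtain ⟨hx11, hx12⟩ := Finset.mem_product.mp hx1
      obtain ⟨hx21, hx22⟩ := Finset.mem_product.mp hx2
      have hu : x.1.1 ≠ 0 := (Finset.mem_filter.mp hx11).2
      have ha : x.1.2 ≠ 0 := (Finset.mem_filter.mp hx12).2
      have hv : x.2.1 ≠ 0 := (Finset.mem_filter.mp hx21).2
      have hb : x.2.2 ≠ 0 := (Finset.mem_filter.mp hx22).2
      have := char_sum hp hu ha hv hb
      simp only [hf]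
      convert this using 2
    rw [Finset.sum_congr rfl point]
    have extend : (∑ x ∈ P,
        if gfun p x.1 = gfun p x.2 ∧ gfun p x.1 ≠ 0 then (p : ℂ) - 1 else 0)
        = ∑ x : (ZMod p × ZMod p) × (ZMod p × ZMod p),
          if gfun p x.1 = gfun p x.2 ∧ gfun p x.1 ≠ 0 then (p : ℂ) - 1 else 0 := by
      apply Finset.sum_subset (Finset.subset_univ P)
      intro x _ hxP
      rw [if_neg]
      intro hcond
      apply hxP
      have k1 := gfun_coords_ne_zero hcond.2
      have k2 := gfun_coords_ne_zero (hcond.1 ▸ hcond.2)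
      rw [hP]
      refine Finset.mem_product.mpr ⟨Finset.mem_product.mpr ⟨?_, ?_⟩,
        Finset.mem_product.mpr ⟨?_, ?_⟩⟩ <;>
        rw [hU] <;> rw [Finset.mem_filter]
      · exact ⟨Finset.mem_univ _, k1.1⟩
      · exact ⟨Finset.mem_univ _, k1.2⟩
      · exact ⟨Finset.mem_univ _, k2.1⟩
      · exact ⟨Finset.mem_univ _, k2.2⟩
    rw [extend]
    have pull : ∀ x : (ZMod p × ZMod p) × (ZMod p × ZMod p),
        (if gfun p x.1 = gfun p x.2 ∧ gfun p x.1 ≠ 0 then (p : ℂ) - 1 else 0)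
        = ((p : ℂ) - 1) * (if gfun p x.1 = gfun p x.2 ∧ gfun p x.1 ≠ 0 then 1 else 0) := by
      intro x
      by_cases h : gfun p x.1 = gfun p x.2 ∧ gfun p x.1 ≠ 0
      · rw [if_pos h, if_pos h, mul_one]
      · rw [if_neg h, if_neg h, mul_zero]
    rw [Finset.sum_congr rfl fun x _ => pull x, ← Finset.mul_sum, Ncount hp]
  have step1 : ((∑ ψ : DirichletCharacter ℂ p,
      (‖∑ u ∈ U, ∑ a ∈ U, f ψ u a‖) ^ 2 : ℝ) : ℂ)
      = ∑ ψ : DirichletCharacter ℂ p,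
        (∑ u ∈ U, ∑ a ∈ U, f ψ u a) * (starRingEnd ℂ) (∑ u ∈ U, ∑ a ∈ U, f ψ u a) := by
    push_cast
    refine Finset.sum_congr rfl fun ψ _ => ?_
    rw [← Complex.ofReal_pow, ← Complex.normSq_eq_norm_sq, ← Complex.mul_conj]
  apply Complex.ofReal_injective
  rw [step1, step2]
  push_cast
  ring
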